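/- Let P be a finite poset, U, W : [0,1]² → [0,1] measurable functions, and m the number of related pairs of P (pairs a ≺ b). Then |t(P,U) − t(P,W)| ≤ m·‖U − W‖_□, where ‖·‖_□ is the cut norm. -/

import Mathlib

open MeasureTheory
open scoped Classical

/-- Lebesgue measure restricted to `[0,1]`. -/
noncomputable def lebI : Measure ℝ := volume.restrict (Set.Icc (0:ℝ) 1)

/-- The cut norm of a function on `[0,1]²`: the supremum over Borel sets `S, T ⊆ [0,1]`
of `|∫_{S×T} f|`. -/
noncomputable def cutNorm (f : ℝ × ℝ → ℝ) : ℝ :=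
  ⨆ ST : {q : Set ℝ × Set ℝ // MeasurableSet q.1 ∧ MeasurableSet q.2},
    |∫ p in ST.1.1 ×ˢ ST.1.2, f p ∂(lebI.prod lebI)|

/-- The density `t(P, W)` of the finite poset `(P, s)` in a kernel `W` on `[0,1]`. -/
noncomputable def tDens {P : Type*} [Fintype P] (s : P → P → Prop)
    (W : ℝ → ℝ → ℝ) : ℝ :=
  ∫ x : P → ℝ,
    ∏ q ∈ Finset.univ.filter (fun q : P × P => s q.1 q.2), W (x q.1) (x q.2)
    ∂(Measure.pi fun _ : P => lebI)

/-! ### Auxiliary lemmas -/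

instance : IsProbabilityMeasure lebI := by
  constructor; simp [lebI, Real.volume_Icc]

lemma integrable_of_bdd {α : Type*} [MeasurableSpace α] {μ : Measure α} [IsFiniteMeasure μ]
    {g : α → ℝ} (hg : AEStronglyMeasurable g μ) {C : ℝ} (hgb : ∀ x, |g x| ≤ C) :
    Integrable g μ :=
  (integrable_const C).mono' hg (Filter.Eventually.of_forall fun x => by simpa using hgb x)

lemma cutNorm_bdd {f : ℝ × ℝ → ℝ} (hf : Measurable f) (hfb : ∀ p, |f p| ≤ 2) :
    ∀ ST : {q : Set ℝ × Set ℝ // MeasurableSet q.1 ∧ MeasurableSet q.2},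
      |∫ p in ST.1.1 ×ˢ ST.1.2, f p ∂(lebI.prod lebI)| ≤ 2 := by
  intro ST
  rw [abs_le]
  constructor <;>
  · have := norm_integral_le_of_norm_le_const (μ := (lebI.prod lebI).restrict (ST.1.1 ×ˢ ST.1.2))
      (f := f) (C := 2) (Filter.Eventually.of_forall fun p => by simpa using hfb p)
    rw [Real.norm_eq_abs, abs_le, measureReal_def] at this
    have hm : ((lebI.prod lebI).restrict (ST.1.1 ×ˢ ST.1.2) Set.univ).toReal ≤ 1 := by
      rw [Measure.restrict_apply_univ]
      have h1 : (lebI.prod lebI) (ST.1.1 ×ˢ ST.1.2) ≤ (lebI.prod lebI) Set.univ :=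
        measure_mono (Set.subset_univ _)
      have h2 : (lebI.prod lebI) Set.univ = 1 := by simp
      calc ((lebI.prod lebI) (ST.1.1 ×ˢ ST.1.2)).toReal ≤ ((lebI.prod lebI) Set.univ).toReal :=
            ENNReal.toReal_mono (by simp [h2]) h1
        _ = 1 := by simp [h2]
    nlinarith [this.1, this.2]

lemma abs_setIntegral_le_cutNorm {f : ℝ × ℝ → ℝ} (hf : Measurable f) (hfb : ∀ p, |f p| ≤ 2)
    {S T : Set ℝ} (hS : MeasurableSet S) (hT : MeasurableSet T) :
    |∫ p in S ×ˢ T, f p ∂(lebI.prod lebI)| ≤ cutNorm f :=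
  le_ciSup (f := fun ST : {q : Set ℝ × Set ℝ // MeasurableSet q.1 ∧ MeasurableSet q.2} =>
    |∫ p in ST.1.1 ×ˢ ST.1.2, f p ∂(lebI.prod lebI)|)
    ⟨2, by rintro x ⟨ST, rfl⟩; exact cutNorm_bdd hf hfb ST⟩ ⟨(S, T), hS, hT⟩

lemma cutNorm_nonneg {f : ℝ × ℝ → ℝ} (hf : Measurable f) (hfb : ∀ p, |f p| ≤ 2) :
    0 ≤ cutNorm f :=
  le_trans (abs_nonneg _) (abs_setIntegral_le_cutNorm hf hfb (S := ∅) (T := ∅)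
    MeasurableSet.empty MeasurableSet.empty)

lemma exists_set_abs_integral_mul_le {α : Type*} [MeasurableSpace α] {μ : Measure α}
    [IsFiniteMeasure μ] {g u : α → ℝ} (hg : Measurable g) {C : ℝ} (hgb : ∀ x, |g x| ≤ C)
    (hu : Measurable u) (hu01 : ∀ x, u x ∈ Set.Icc (0:ℝ) 1) :
    ∃ S, MeasurableSet S ∧ |∫ x, u x * g x ∂μ| ≤ |∫ x in S, g x ∂μ| := by
  have hgint : Integrable g μ := integrable_of_bdd hg.aestronglyMeasurable hgb
  have hugint : Integrable (fun x => u x * g x) μ := by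
    refine integrable_of_bdd (hu.mul hg).aestronglyMeasurable (C := C) fun x => ?_
    have h1 := (hu01 x).1; have h2 := (hu01 x).2; have := hgb x
    rw [abs_mul]; rw [abs_of_nonneg h1]
    nlinarith [abs_nonneg (g x)]
  by_cases h : 0 ≤ ∫ x, u x * g x ∂μ
  · refine ⟨{x | 0 < g x}, measurableSet_lt measurable_const hg, ?_⟩
    have hS : MeasurableSet {x | 0 < g x} := measurableSet_lt measurable_const hg
    have h1 : ∫ x, u x * g x ∂μ ≤ ∫ x in {x | 0 < g x}, g x ∂μ := by
      rw [← integral_add_compl hS hugint]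
      have hA : ∫ x in {x | 0 < g x}, u x * g x ∂μ ≤ ∫ x in {x | 0 < g x}, g x ∂μ := by
        refine setIntegral_mono_on hugint.integrableOn hgint.integrableOn hS fun x hx => ?_
        have : 0 < g x := hx
        nlinarith [(hu01 x).1, (hu01 x).2]
      have hB : ∫ x in {x | 0 < g x}ᶜ, u x * g x ∂μ ≤ 0 := by
        refine setIntegral_nonpos hS.compl fun x hx => ?_
        have : ¬ 0 < g x := hx
        have : g x ≤ 0 := not_lt.mp this
        nlinarith [(hu01 x).1]
      linarith
    calc |∫ x, u x * g x ∂μ| = ∫ x, u x * g x ∂μ := abs_of_nonneg h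
      _ ≤ ∫ x in {x | 0 < g x}, g x ∂μ := h1
      _ ≤ |∫ x in {x | 0 < g x}, g x ∂μ| := le_abs_self _
  · refine ⟨{x | g x < 0}, measurableSet_lt hg measurable_const, ?_⟩
    have hS : MeasurableSet {x | g x < 0} := measurableSet_lt hg measurable_const
    have h1 : ∫ x in {x | g x < 0}, g x ∂μ ≤ ∫ x, u x * g x ∂μ := by
      rw [← integral_add_compl hS hugint]
      have hA : ∫ x in {x | g x < 0}, g x ∂μ ≤ ∫ x in {x | g x < 0}, u x * g x ∂μ := by
        refine setIntegral_mono_on hgint.integrableOn hugint.integrableOn hS fun x hx => ?_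
        have : g x < 0 := hx
        nlinarith [(hu01 x).1, (hu01 x).2]
      have hB : 0 ≤ ∫ x in {x | g x < 0}ᶜ, u x * g x ∂μ := by
        refine setIntegral_nonneg hS.compl fun x hx => ?_
        have : ¬ g x < 0 := hx
        have : 0 ≤ g x := not_lt.mp this
        nlinarith [(hu01 x).1]
      linarith
    push_neg at h
    calc |∫ x, u x * g x ∂μ| = -∫ x, u x * g x ∂μ := abs_of_neg h
      _ ≤ -∫ x in {x | g x < 0}, g x ∂μ := by linarith
      _ ≤ |∫ x in {x | g x < 0}, g x ∂μ| := neg_le_abs _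

lemma restrict_univ_le_one {S : Set ℝ} :
    ((lebI.restrict S) Set.univ).toReal ≤ 1 := by
  rw [Measure.restrict_apply_univ]
  have h1 : lebI S ≤ lebI Set.univ := measure_mono (Set.subset_univ _)
  have h2 : lebI Set.univ = 1 := measure_univ
  calc (lebI S).toReal ≤ (lebI Set.univ).toReal := ENNReal.toReal_mono (by simp [h2]) h1
    _ = 1 := by simp [h2]

lemma testBound {f : ℝ × ℝ → ℝ} (hf : Measurable f) (hfb : ∀ p, |f p| ≤ 2)
    {u v : ℝ → ℝ} (hu : Measurable u) (hv : Measurable v)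
    (hu01 : ∀ x, u x ∈ Set.Icc (0:ℝ) 1) (hv01 : ∀ y, v y ∈ Set.Icc (0:ℝ) 1) :
    |∫ p, u p.1 * v p.2 * f p ∂(lebI.prod lebI)| ≤ cutNorm f := by
  set g : ℝ → ℝ := fun x => ∫ y, v y * f (x, y) ∂lebI with hg_def
  have hgmeas : Measurable g := by
    have : StronglyMeasurable fun p : ℝ × ℝ => v p.2 * f p :=
      ((hv.comp measurable_snd).mul hf).stronglyMeasurable
    exact (StronglyMeasurable.integral_prod_right' this).measurable
  have hgb : ∀ x, |g x| ≤ 2 := by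
    intro x
    have := norm_integral_le_of_norm_le_const (μ := lebI) (f := fun y => v y * f (x, y)) (C := 2)
      (Filter.Eventually.of_forall fun y => by
        have h1 := (hv01 y).1; have h2 := (hv01 y).2; have h3 := hfb (x, y)
        rw [Real.norm_eq_abs, abs_mul, abs_of_nonneg h1]
        nlinarith [abs_nonneg (f (x, y))])
    simpa using this
  have hstep1 : ∫ p, u p.1 * v p.2 * f p ∂(lebI.prod lebI) = ∫ x, u x * g x ∂lebI := by
    have hint : Integrable (fun p : ℝ × ℝ => u p.1 * v p.2 * f p) (lebI.prod lebI) := by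
      refine integrable_of_bdd (((hu.comp measurable_fst).mul
        (hv.comp measurable_snd)).mul hf).aestronglyMeasurable (C := 2) fun p => ?_
      have h1 := (hu01 p.1).1; have h2 := (hu01 p.1).2
      have h3 := (hv01 p.2).1; have h4 := (hv01 p.2).2
      have h5 := hfb p
      rw [abs_mul, abs_mul, abs_of_nonneg h1, abs_of_nonneg h3]
      have huv : u p.1 * v p.2 ≤ 1 := mul_le_one₀ h2 h3 h4
      nlinarith [abs_nonneg (f p), mul_nonneg h1 h3]
    rw [integral_prod _ hint]
    simp only [mul_assoc, integral_const_mul]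
    rfl
  rw [hstep1]
  obtain ⟨S, hS, hbS⟩ := exists_set_abs_integral_mul_le (μ := lebI) hgmeas hgb hu hu01
  set h : ℝ → ℝ := fun y => ∫ x, f (x, y) ∂(lebI.restrict S) with hh_def
  have hhmeas : Measurable h := by
    have : StronglyMeasurable fun p : ℝ × ℝ => f (p.2, p.1) :=
      (hf.comp (measurable_snd.prodMk measurable_fst)).stronglyMeasurable
    exact (StronglyMeasurable.integral_prod_right' (ν := lebI.restrict S) this).measurable
  have hhb : ∀ y, |h y| ≤ 2 := by
    intro y
    have := norm_integral_le_of_norm_le_const (μ := lebI.restrict S) (f := fun x => f (x, y))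
      (C := 2) (Filter.Eventually.of_forall fun x => by simpa using hfb (x, y))
    rw [Real.norm_eq_abs, measureReal_def] at this
    nlinarith [restrict_univ_le_one (S := S), abs_nonneg (∫ x, f (x, y) ∂lebI.restrict S)]
  have hstep2 : ∫ x in S, g x ∂lebI = ∫ y, v y * h y ∂lebI := by
    have hint : Integrable (Function.uncurry fun x y => v y * f (x, y))
        ((lebI.restrict S).prod lebI) := by
      refine integrable_of_bdd ((hv.comp measurable_snd).mul
        (hf.comp (measurable_fst.prodMk measurable_snd))).aestronglyMeasurable
        (C := 2) fun p => ?_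
      have h1 := (hv01 p.2).1; have h2 := (hv01 p.2).2; have h3 := hfb p
      simp only [Function.uncurry]
      rw [abs_mul, abs_of_nonneg h1]
      nlinarith [abs_nonneg (f p)]
    have := integral_integral_swap (μ := lebI.restrict S) (ν := lebI)
      (f := fun x y => v y * f (x, y)) hint
    rw [hg_def]
    simp only at this ⊢
    rw [this]
    simp only [integral_const_mul, hh_def]
  rw [hstep2] at hbS
  obtain ⟨T, hT, hbT⟩ := exists_set_abs_integral_mul_le (μ := lebI) hhmeas hhb hv hv01
  have hstep3 : ∫ y in T, h y ∂lebI = ∫ p in S ×ˢ T, f p ∂(lebI.prod lebI) := by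
    have hint : Integrable f ((lebI.restrict S).prod (lebI.restrict T)) :=
      integrable_of_bdd hf.aestronglyMeasurable (C := 2) hfb
    rw [← Measure.prod_restrict, integral_prod_symm _ hint]
  rw [hstep3] at hbT
  calc |∫ x, u x * g x ∂lebI| ≤ |∫ y, v y * h y ∂lebI| := hbS
    _ ≤ |∫ p in S ×ˢ T, f p ∂(lebI.prod lebI)| := hbT
    _ ≤ cutNorm f := abs_setIntegral_le_cutNorm hf hfb hS hT

/-! ### Splitting off two coordinates of a product measure -/

section Split
variable {P : Type*} [Fintype P]

noncomputable def asm (a b : P) (w : ℝ × ℝ) (z : {i : P // ¬ (i = a ∨ i = b)} → ℝ) : P → ℝ :=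
  fun i => if h : i = a then w.1 else if h' : i = b then w.2 else z ⟨i, by tauto⟩

noncomputable def pairEquiv {a b : P} (hab : a ≠ b) :
    Fin 2 ≃ {i : P // i = a ∨ i = b} where
  toFun j := if j = 0 then ⟨a, Or.inl rfl⟩ else ⟨b, Or.inr rfl⟩
  invFun x := if x.1 = a then 0 else 1
  left_inv j := by fin_cases j <;> simp [hab.symm]
  right_inv x := by
    rcases x with ⟨i, hi | hi⟩ <;> subst hi <;> simp [hab, hab.symm]

noncomputable def splitEquiv {a b : P} (hab : a ≠ b) :
    ((ℝ × ℝ) × ({i : P // ¬ (i = a ∨ i = b)} → ℝ)) ≃ᵐ (P → ℝ) :=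
  (((MeasurableEquiv.piFinTwo fun _ : Fin 2 => ℝ).symm.trans
      (MeasurableEquiv.piCongrLeft (fun _ => ℝ) (pairEquiv hab))).prodCongr
    (MeasurableEquiv.refl _)).trans
    (MeasurableEquiv.piEquivPiSubtypeProd (fun _ : P => ℝ) (fun i => i = a ∨ i = b)).symm

lemma splitEquiv_apply {a b : P} (hab : a ≠ b) (w : ℝ × ℝ)
    (z : {i : P // ¬ (i = a ∨ i = b)} → ℝ) :
    splitEquiv hab (w, z) = asm a b w z := by
  funext i
  show (MeasurableEquiv.piEquivPiSubtypeProd (fun _ : P => ℝ)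
      (fun i => i = a ∨ i = b)).symm
      ((MeasurableEquiv.piCongrLeft (fun _ => ℝ) (pairEquiv hab))
        ((MeasurableEquiv.piFinTwo fun _ : Fin 2 => ℝ).symm w), z) i = asm a b w z i
  set g := (MeasurableEquiv.piCongrLeft (fun _ => ℝ) (pairEquiv hab))
        ((MeasurableEquiv.piFinTwo fun _ : Fin 2 => ℝ).symm w) with hg
  show (if h : (i = a ∨ i = b) then g ⟨i, h⟩ else z ⟨i, h⟩) = asm a b w z i
  by_cases h : i = a ∨ i = b
  · rw [dif_pos h]
    rcases h with h | h
    · have key : (⟨i, Or.inl h⟩ : {j : P // j = a ∨ j = b}) = pairEquiv hab 0 :=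
        Subtype.ext (by simp [pairEquiv, h])
      have : g ⟨i, Or.inl h⟩ = w.1 := by
        rw [show (⟨i, Or.inl h⟩ : {j : P // j = a ∨ j = b}) = pairEquiv hab 0 from key, hg,
          MeasurableEquiv.piCongrLeft_apply_apply]
        simp [MeasurableEquiv.piFinTwo]
      rw [this]
      simp [asm, h]
    · have key : (⟨i, Or.inr h⟩ : {j : P // j = a ∨ j = b}) = pairEquiv hab 1 :=
        Subtype.ext (by simp [pairEquiv, h])
      have hval : g ⟨i, Or.inr h⟩ = w.2 := by
        rw [show (⟨i, Or.inr h⟩ : {j : P // j = a ∨ j = b}) = pairEquiv hab 1 from key, hg,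
          MeasurableEquiv.piCongrLeft_apply_apply]
        simp [MeasurableEquiv.piFinTwo]
      rw [hval]
      subst h
      have hia : i ≠ a := fun hh => hab hh.symm
      simp [asm, hia, hab.symm]
  · rw [dif_neg h]
    rw [asm, dif_neg (fun hh => h (Or.inl hh)), dif_neg (fun hh => h (Or.inr hh))]

lemma splitEquiv_mp {a b : P} (hab : a ≠ b) :
    MeasurePreserving (splitEquiv (P := P) hab)
      ((lebI.prod lebI).prod
        (Measure.pi fun _ : {i : P // ¬ (i = a ∨ i = b)} => lebI))
      (Measure.pi fun _ : P => lebI) := by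
  have h1 := measurePreserving_piEquivPiSubtypeProd (fun _ : P => lebI)
    (fun i => i = a ∨ i = b)
  have h2 := measurePreserving_piCongrLeft
    (fun _ : {i : P // i = a ∨ i = b} => lebI) (pairEquiv hab)
  have h3 := measurePreserving_piFinTwo (fun _ : Fin 2 => lebI)
  exact (MeasurePreserving.symm _ h1).comp
    ((h2.comp (MeasurePreserving.symm _ h3)).prod (MeasurePreserving.id _))

lemma integral_split {a b : P} (hab : a ≠ b) (F : (P → ℝ) → ℝ) (hF : Measurable F)
    {C : ℝ} (hFb : ∀ x, |F x| ≤ C) :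
    ∫ x, F x ∂(Measure.pi fun _ : P => lebI)
      = ∫ z, (∫ w, F (asm a b w z) ∂(lebI.prod lebI))
          ∂(Measure.pi fun _ : {i : P // ¬ (i = a ∨ i = b)} => lebI) := by
  have hcomp := (splitEquiv_mp (P := P) hab).integral_comp
    (splitEquiv (P := P) hab).measurableEmbedding F
  rw [← hcomp]
  have hmeas : Measurable fun q : (ℝ × ℝ) × ({i : P // ¬ (i = a ∨ i = b)} → ℝ) =>
      F (splitEquiv hab q) := hF.comp (splitEquiv hab).measurable
  have hint : Integrable (fun q : (ℝ × ℝ) × ({i : P // ¬ (i = a ∨ i = b)} → ℝ) =>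
      F (splitEquiv hab q))
      ((lebI.prod lebI).prod (Measure.pi fun _ => lebI)) :=
    integrable_of_bdd hmeas.aestronglyMeasurable (fun q => hFb _)
  rw [integral_prod_symm _ hint]
  refine integral_congr_ae (Filter.Eventually.of_forall fun z => ?_)
  refine integral_congr_ae (Filter.Eventually.of_forall fun w => ?_)
  simp only [splitEquiv_apply]

/-! ### The single-swap bound -/

lemma swap_bound {a b : P} (hab : a ≠ b)
    (D : Finset (P × P))
    (hD1 : ∀ e' ∈ D, ¬ (e'.1 = a ∧ e'.2 = b))
    (hD2 : ∀ e' ∈ D, ¬ (e'.1 = b ∧ e'.2 = a))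
    (hD3 : ∀ e' ∈ D, e'.1 ≠ e'.2)
    (K : P × P → ℝ → ℝ → ℝ)
    (hKmeas : ∀ e', Measurable fun p : ℝ × ℝ => K e' p.1 p.2)
    (hKrange : ∀ e' x y, K e' x y ∈ Set.Icc (0:ℝ) 1)
    (f : ℝ × ℝ → ℝ) (hf : Measurable f) (hfb : ∀ p, |f p| ≤ 2) :
    |∫ x, (∏ e' ∈ D, K e' (x e'.1) (x e'.2)) * f (x a, x b)
        ∂(Measure.pi fun _ : P => lebI)| ≤ cutNorm f := by
  set G : (P → ℝ) → ℝ :=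
    fun x => (∏ e' ∈ D, K e' (x e'.1) (x e'.2)) * f (x a, x b) with hG_def
  have hprodmeas : Measurable fun x : P → ℝ => ∏ e' ∈ D, K e' (x e'.1) (x e'.2) := by
    refine Finset.measurable_prod _ fun e' _ => ?_
    have : Measurable ((fun p : ℝ × ℝ => K e' p.1 p.2) ∘ fun x : P → ℝ => (x e'.1, x e'.2)) :=
      (hKmeas e').comp ((measurable_pi_apply e'.1).prodMk (measurable_pi_apply e'.2))
    exact this
  have hGmeas : Measurable G :=
    hprodmeas.mul (by
      have : Measurable (f ∘ fun x : P → ℝ => (x a, x b)) :=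
        hf.comp ((measurable_pi_apply a).prodMk (measurable_pi_apply b))
      exact this)
  have hprod01 : ∀ (D' : Finset (P × P)) (g : P × P → ℝ),
      (∀ e' ∈ D', g e' ∈ Set.Icc (0:ℝ) 1) → (∏ e' ∈ D', g e') ∈ Set.Icc (0:ℝ) 1 := by
    intro D' g hg
    exact ⟨Finset.prod_nonneg fun e' he' => (hg e' he').1,
      Finset.prod_le_one (fun e' he' => (hg e' he').1) (fun e' he' => (hg e' he').2)⟩
  have hGb : ∀ x, |G x| ≤ 2 := by
    intro x
    rw [hG_def, abs_mul]
    have h1 := hprod01 D (fun e' => K e' (x e'.1) (x e'.2)) (fun e' _ => hKrange e' _ _)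
    rw [abs_of_nonneg h1.1]
    nlinarith [hfb (x a, x b), abs_nonneg (f (x a, x b)), h1.2]
  rw [integral_split hab G hGmeas hGb]
  set u : ({i : P // ¬ (i = a ∨ i = b)} → ℝ) → ℝ → ℝ :=
    fun z x => ∏ e' ∈ D.filter (fun e' => e'.1 ≠ b ∧ e'.2 ≠ b),
      K e' (asm a b (x, 0) z e'.1) (asm a b (x, 0) z e'.2) with hu_def
  set v : ({i : P // ¬ (i = a ∨ i = b)} → ℝ) → ℝ → ℝ :=
    fun z y => ∏ e' ∈ D.filter (fun e' => ¬ (e'.1 ≠ b ∧ e'.2 ≠ b)),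
      K e' (asm a b (0, y) z e'.1) (asm a b (0, y) z e'.2) with hv_def
  have key : ∀ z w, G (asm a b w z) = u z w.1 * v z w.2 * f w := by
    intro z w
    have hGa : asm a b w z a = w.1 := by simp [asm]
    have hGb2 : asm a b w z b = w.2 := by simp [asm, hab.symm]
    rw [hG_def]
    simp only [hGa, hGb2]
    rw [show ((w.1, w.2) : ℝ × ℝ) = w from rfl]
    congr 1
    rw [hu_def, hv_def]
    rw [← Finset.prod_filter_mul_prod_filter_not D (fun e' => e'.1 ≠ b ∧ e'.2 ≠ b)]
    congr 1
    · refine Finset.prod_congr rfl fun e' he' => ?_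
      rw [Finset.mem_filter] at he'
      obtain ⟨hmem, h1, h2⟩ := he'
      have hco : ∀ i : P, i ≠ b → asm a b w z i = asm a b (w.1, 0) z i := by
        intro i hi
        by_cases hia : i = a <;> simp [asm, hia, hi]
      rw [hco _ h1, hco _ h2]
    · refine Finset.prod_congr rfl fun e' he' => ?_
      rw [Finset.mem_filter] at he'
      obtain ⟨hmem, hne⟩ := he'
      push_neg at hne
      have hco : ∀ i : P, (i = b ∨ (i ≠ a ∧ i ≠ b)) → asm a b w z i = asm a b (0, w.2) z i := by
        rintro i (rfl | ⟨hia, hib⟩)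
        · simp [asm, hab.symm]
        · simp [asm, hia, hib]
      by_cases h1 : e'.1 = b
      · have h2a : e'.2 ≠ a := fun hh => hD2 e' hmem ⟨h1, hh⟩
        have h2b : e'.2 ≠ b := fun hh => hD3 e' hmem (h1.trans hh.symm)
        rw [hco e'.1 (Or.inl h1), hco e'.2 (Or.inr ⟨h2a, h2b⟩)]
      · have h2 : e'.2 = b := hne h1
        have h1a : e'.1 ≠ a := fun hh => hD1 e' hmem ⟨hh, h2⟩
        rw [hco e'.1 (Or.inr ⟨h1a, h1⟩), hco e'.2 (Or.inl h2)]
  have hcoordmeas : ∀ (z : {i : P // ¬ (i = a ∨ i = b)} → ℝ) (c : ℝ) (i : P),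
      Measurable fun x : ℝ => asm a b (x, c) z i := by
    intro z c i
    by_cases hia : i = a
    · simp only [asm, dif_pos hia]; exact measurable_id
    · by_cases hib : i = b
      · simp only [asm, dif_neg hia, dif_pos hib]; exact measurable_const
      · simp only [asm, dif_neg hia, dif_neg hib]; exact measurable_const
  have hcoordmeas2 : ∀ (z : {i : P // ¬ (i = a ∨ i = b)} → ℝ) (c : ℝ) (i : P),
      Measurable fun y : ℝ => asm a b (c, y) z i := by
    intro z c i
    by_cases hia : i = a
    · simp only [asm, dif_pos hia]; exact measurable_const
    · by_cases hib : i = b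
      · simp only [asm, dif_neg hia, dif_pos hib]; exact measurable_id
      · simp only [asm, dif_neg hia, dif_neg hib]; exact measurable_const
  have humeas : ∀ z, Measurable (u z) := by
    intro z
    refine Finset.measurable_prod _ fun e' _ => ?_
    have : Measurable ((fun p : ℝ × ℝ => K e' p.1 p.2) ∘
        fun x : ℝ => (asm a b (x, 0) z e'.1, asm a b (x, 0) z e'.2)) :=
      (hKmeas e').comp ((hcoordmeas z 0 e'.1).prodMk (hcoordmeas z 0 e'.2))
    exact this
  have hvmeas : ∀ z, Measurable (v z) := by
    intro z
    refine Finset.measurable_prod _ fun e' _ => ?_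
    have : Measurable ((fun p : ℝ × ℝ => K e' p.1 p.2) ∘
        fun y : ℝ => (asm a b (0, y) z e'.1, asm a b (0, y) z e'.2)) :=
      (hKmeas e').comp ((hcoordmeas2 z 0 e'.1).prodMk (hcoordmeas2 z 0 e'.2))
    exact this
  have hurange : ∀ z x, u z x ∈ Set.Icc (0:ℝ) 1 := fun z x =>
    hprod01 _ _ (fun e' _ => hKrange e' _ _)
  have hvrange : ∀ z y, v z y ∈ Set.Icc (0:ℝ) 1 := fun z y =>
    hprod01 _ _ (fun e' _ => hKrange e' _ _)
  have hinner : ∀ z, |∫ w, G (asm a b w z) ∂(lebI.prod lebI)| ≤ cutNorm f := by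
    intro z
    have : (fun w => G (asm a b w z)) = fun w : ℝ × ℝ => u z w.1 * v z w.2 * f w :=
      funext (key z)
    rw [this]
    exact testBound hf hfb (humeas z) (hvmeas z) (hurange z) (hvrange z)
  have hout := norm_integral_le_of_norm_le_const
    (μ := (Measure.pi fun _ : {i : P // ¬ (i = a ∨ i = b)} => lebI))
    (f := fun z => ∫ w, G (asm a b w z) ∂(lebI.prod lebI)) (C := cutNorm f)
    (Filter.Eventually.of_forall fun z => by simpa using hinner z)
  simpa using hout

end Split

/-! ### Main theorem -/

theorem stmt19 {P : Type*} [Fintype P] (s : P → P → Prop)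
    (hs_irr : ∀ a, ¬ s a a) (hs_trans : ∀ a b c, s a b → s b c → s a c)
    (U W : ℝ → ℝ → ℝ)
    (hUmeas : Measurable (fun p : ℝ × ℝ => U p.1 p.2))
    (hWmeas : Measurable (fun p : ℝ × ℝ => W p.1 p.2))
    (hUrange : ∀ x y, U x y ∈ Set.Icc (0:ℝ) 1)
    (hWrange : ∀ x y, W x y ∈ Set.Icc (0:ℝ) 1) :
    |tDens s U - tDens s W| ≤
      ((Finset.univ.filter (fun q : P × P => s q.1 q.2)).card : ℝ) *
        cutNorm (fun p : ℝ × ℝ => U p.1 p.2 - W p.1 p.2) := by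
  set E : Finset (P × P) := Finset.univ.filter (fun q : P × P => s q.1 q.2) with hE_def
  set f : ℝ × ℝ → ℝ := fun p => U p.1 p.2 - W p.1 p.2 with hf_def
  have hf : Measurable f := hUmeas.sub hWmeas
  have hfb : ∀ p, |f p| ≤ 2 := by
    intro p
    have h1 := hUrange p.1 p.2; have h2 := hWrange p.1 p.2
    rw [hf_def, abs_le]
    constructor <;> simp <;> nlinarith [h1.1, h1.2, h2.1, h2.2]
  set π : Measure (P → ℝ) := Measure.pi fun _ : P => lebI with hπ_def
  set mix : Finset (P × P) → (P → ℝ) → ℝ :=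
    fun A x => ∏ e ∈ E, (if e ∈ A then U else W) (x e.1) (x e.2) with hmix_def
  have hmixmeas : ∀ A, Measurable (mix A) := by
    intro A
    refine Finset.measurable_prod _ fun e _ => ?_
    by_cases he : e ∈ A <;> simp only [he, if_true, if_false]
    · have : Measurable ((fun p : ℝ × ℝ => U p.1 p.2) ∘ fun x : P → ℝ => (x e.1, x e.2)) :=
        hUmeas.comp ((measurable_pi_apply e.1).prodMk (measurable_pi_apply e.2))
      exact this
    · have : Measurable ((fun p : ℝ × ℝ => W p.1 p.2) ∘ fun x : P → ℝ => (x e.1, x e.2)) :=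
        hWmeas.comp ((measurable_pi_apply e.1).prodMk (measurable_pi_apply e.2))
      exact this
  have hmixb : ∀ A x, |mix A x| ≤ 1 := by
    intro A x
    simp only [hmix_def]; rw [abs_le]
    constructor
    · have : (0:ℝ) ≤ ∏ e ∈ E, (if e ∈ A then U else W) (x e.1) (x e.2) :=
        Finset.prod_nonneg fun e _ => by
          by_cases he : e ∈ A <;> simp only [he, if_true, if_false] <;>
            [exact (hUrange _ _).1; exact (hWrange _ _).1]
      linarith
    · exact Finset.prod_le_one
        (fun e _ => by by_cases he : e ∈ A <;> simp only [he, if_true, if_false] <;>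
          [exact (hUrange _ _).1; exact (hWrange _ _).1])
        (fun e _ => by by_cases he : e ∈ A <;> simp only [he, if_true, if_false] <;>
          [exact (hUrange _ _).2; exact (hWrange _ _).2])
  have hmixint : ∀ A, Integrable (mix A) π :=
    fun A => integrable_of_bdd (hmixmeas A).aestronglyMeasurable (hmixb A)
  -- the single swap estimate
  have hswap : ∀ e ∈ E, ∀ A : Finset (P × P), e ∉ A →
      |∫ x, mix (insert e A) x ∂π - ∫ x, mix A x ∂π| ≤ cutNorm f := by
    intro e heE A heA
    have hse : s e.1 e.2 := by
      rw [hE_def] at heE; simpa using heE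
    have hab : e.1 ≠ e.2 := fun hh => hs_irr e.1 (hh ▸ hse)
    have hdiff : ∀ x, mix (insert e A) x - mix A x =
        (∏ e' ∈ E.erase e, (if e' ∈ A then U else W) (x e'.1) (x e'.2)) *
          f (x e.1, x e.2) := by
      intro x
      have h1 : mix (insert e A) x =
          U (x e.1) (x e.2) * ∏ e' ∈ E.erase e, (if e' ∈ A then U else W) (x e'.1) (x e'.2) := by
        simp only [hmix_def]
        rw [← Finset.mul_prod_erase E _ heE]
        congr 1
        · simp
        · refine Finset.prod_congr rfl fun e' he' => ?_
          have hne : e' ≠ e := (Finset.mem_erase.mp he').1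
          by_cases h : e' ∈ A <;> simp [Finset.mem_insert, h, hne]
      have h2 : mix A x =
          W (x e.1) (x e.2) * ∏ e' ∈ E.erase e, (if e' ∈ A then U else W) (x e'.1) (x e'.2) := by
        simp only [hmix_def]
        rw [← Finset.mul_prod_erase E _ heE]
        congr 1
        simp [heA]
      rw [h1, h2, hf_def]
      ring
    have hstep : ∫ x, mix (insert e A) x ∂π - ∫ x, mix A x ∂π =
        ∫ x, (∏ e' ∈ E.erase e, (if e' ∈ A then U else W) (x e'.1) (x e'.2)) *
          f (x e.1, x e.2) ∂π := by
      rw [← integral_sub (hmixint _) (hmixint _)]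
      exact integral_congr_ae (Filter.Eventually.of_forall fun x => hdiff x)
    rw [hstep]
    refine swap_bound hab (E.erase e) ?_ ?_ ?_
      (fun e' => if e' ∈ A then U else W) ?_ ?_ f hf hfb
    · rintro e' he' ⟨ha, hb⟩
      exact (Finset.mem_erase.mp he').1 (Prod.ext ha hb)
    · rintro e' he' ⟨ha, hb⟩
      have hse' : s e'.1 e'.2 := by
        have := (Finset.mem_erase.mp he').2
        rw [hE_def] at this; simpa using this
      rw [ha, hb] at hse'
      exact hs_irr e.2 (hs_trans _ _ _ hse' hse)
    · intro e' he'
      have hse' : s e'.1 e'.2 := by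
        have := (Finset.mem_erase.mp he').2
        rw [hE_def] at this; simpa using this
      exact fun hh => hs_irr e'.1 (hh ▸ hse')
    · intro e'
      by_cases h : e' ∈ A <;> simp only [h, if_true, if_false] <;> [exact hUmeas; exact hWmeas]
    · intro e' x y
      by_cases h : e' ∈ A <;> simp only [h, if_true, if_false] <;>
        [exact hUrange x y; exact hWrange x y]
  -- telescoping
  have hmain : ∀ A : Finset (P × P), A ⊆ E →
      |∫ x, mix A x ∂π - ∫ x, mix ∅ x ∂π| ≤ (A.card : ℝ) * cutNorm f := by
    intro A
    induction A using Finset.induction_on with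
    | empty => intro _; simp
    | insert _ _ heA ih =>
      rename_i e A
      intro hsub
      have heE : e ∈ E := hsub (Finset.mem_insert_self e A)
      have hAE : A ⊆ E := fun y hy => hsub (Finset.mem_insert_of_mem hy)
      have h1 := hswap e heE A heA
      have h2 := ih hAE
      have h3 : (insert e A).card = A.card + 1 := Finset.card_insert_of_notMem heA
      rw [h3]
      push_cast
      calc |∫ x, mix (insert e A) x ∂π - ∫ x, mix ∅ x ∂π|
          ≤ |∫ x, mix (insert e A) x ∂π - ∫ x, mix A x ∂π| +
            |∫ x, mix A x ∂π - ∫ x, mix ∅ x ∂π| := abs_sub_le _ _ _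
        _ ≤ cutNorm f + (A.card : ℝ) * cutNorm f := add_le_add h1 h2
        _ = ((A.card : ℝ) + 1) * cutNorm f := by ring
  have htU : tDens s U = ∫ x, mix E x ∂π := by
    rw [tDens]; simp only [hmix_def]
    refine integral_congr_ae (Filter.Eventually.of_forall fun x => ?_)
    exact (Finset.prod_congr rfl fun q hq => by rw [if_pos hq]).symm
  have htW : tDens s W = ∫ x, mix ∅ x ∂π := by
    rw [tDens]; simp only [hmix_def]
    refine integral_congr_ae (Filter.Eventually.of_forall fun x => ?_)
    exact (Finset.prod_congr rfl fun q hq => by simp).symm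
  rw [htU, htW]
  exact hmain E (le_refl E)
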